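/- If gradient descent θ_{t+1} = θ_t − η∇L(θ_t) is run on a β-smooth, μ-PL* function L ≥ 0 with η = 1/β, then Σ_{t=0}^{∞} ‖θ_{t+1} − θ_t‖ is finite; specifically, ‖θ_{t+1} − θ_t‖ ≤ η√(2βL(θ_0)) (1 − ημ)^{t/2}, so the iterates form a Cauchy sequence and converge. -/

import Mathlib

open scoped BigOperators
open InnerProductSpace

local notation "⟪" x ", " y "⟫" => @inner ℝ _ _ x y

lemma descent_lemma {d : ℕ} (L : EuclideanSpace ℝ (Fin d) → ℝ) (β : ℝ) (hβ : 0 < β)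
    (hdiff : Differentiable ℝ L)
    (hsmooth : ∀ x y, ‖gradient L x - gradient L y‖ ≤ β * ‖x - y‖)
    (x v : EuclideanSpace ℝ (Fin d)) :
    L (x + v) ≤ L x + ⟪gradient L x, v⟫ + β / 2 * ‖v‖ ^ 2 := by
  have hgradcont : Continuous (gradient L) := by
    have : LipschitzWith (Real.toNNReal β) (gradient L) := by
      apply LipschitzWith.of_dist_le_mul
      intro a b
      simp only [dist_eq_norm, Real.coe_toNNReal _ hβ.le]
      exact hsmooth a b
    exact this.continuous
  set g' : ℝ → ℝ := fun t => ⟪gradient L (x + t • v), v⟫ with hg'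
  have hcurve : ∀ t : ℝ, HasDerivAt (fun s : ℝ => x + s • v) v t := by
    intro t
    simpa using ((hasDerivAt_id t).smul_const v).const_add x
  have hgderiv : ∀ t : ℝ, HasDerivAt (fun s => L (x + s • v)) (g' t) t := by
    intro t
    have hL := ((hdiff (x + t • v)).hasGradientAt).hasFDerivAt
    have := hL.comp_hasDerivAt t (hcurve t)
    simpa [hg', InnerProductSpace.toDual_apply_apply, Function.comp_def] using this
  have hg'cont : Continuous g' := by
    apply Continuous.inner
    · exact hgradcont.comp (by continuity)
    · exact continuous_const
  have hFTC : ∫ t in (0:ℝ)..1, g' t = L (x + v) - L x := by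
    have := intervalIntegral.integral_eq_sub_of_hasDerivAt
      (f := fun s => L (x + s • v)) (f' := g')
      (fun t _ => hgderiv t) (hg'cont.intervalIntegrable 0 1)
    simpa using this
  have hbound : ∀ t ∈ Set.Icc (0:ℝ) 1, g' t ≤ g' 0 + β * t * ‖v‖ ^ 2 := by
    intro t ht
    have : g' t - g' 0 = ⟪gradient L (x + t • v) - gradient L (x + (0:ℝ) • v), v⟫ := by
      simp [hg', inner_sub_left]
    have h1 : g' t - g' 0 ≤ ‖gradient L (x + t • v) - gradient L (x + (0:ℝ) • v)‖ * ‖v‖ := by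
      rw [this]; exact real_inner_le_norm _ _
    have h2 : ‖gradient L (x + t • v) - gradient L (x + (0:ℝ) • v)‖ ≤ β * (t * ‖v‖) := by
      have := hsmooth (x + t • v) (x + (0:ℝ) • v)
      have he : (x + t • v) - (x + (0:ℝ) • v) = t • v := by
        simp
      rw [he] at this
      simpa [norm_smul, abs_of_nonneg ht.1] using this
    have h3 := le_trans h1 (mul_le_mul_of_nonneg_right h2 (norm_nonneg v))
    have h4 : β * (t * ‖v‖) * ‖v‖ = β * t * ‖v‖ ^ 2 := by ring
    linarith
  have hint : ∫ t in (0:ℝ)..1, g' t ≤ ∫ t in (0:ℝ)..1, (g' 0 + β * t * ‖v‖ ^ 2) := by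
    apply intervalIntegral.integral_mono_on (by norm_num)
      (hg'cont.intervalIntegrable 0 1) (((continuous_const.add ((continuous_const.mul continuous_id).mul
        continuous_const)).intervalIntegrable 0 1))
    exact hbound
  have hval : ∫ t in (0:ℝ)..1, (g' 0 + β * t * ‖v‖ ^ 2) = g' 0 + β / 2 * ‖v‖ ^ 2 := by
    have h1 : (fun t : ℝ => g' 0 + β * t * ‖v‖ ^ 2) = fun t : ℝ => g' 0 + (β * ‖v‖ ^ 2) * t := by
      funext t; ring
    rw [h1, intervalIntegral.integral_add (f := fun _ : ℝ => g' 0) (g := fun t : ℝ => β * ‖v‖ ^ 2 * t) intervalIntegrable_const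
      ((continuous_const.mul continuous_id').intervalIntegrable 0 1),
      intervalIntegral.integral_const_mul, integral_id]
    simp
    ring
  have hg0 : g' 0 = ⟪gradient L x, v⟫ := by simp [hg']
  rw [hFTC] at hint
  rw [hval, hg0] at hint
  linarith

lemma sqrt_pow_aux (x : ℝ) (hx : 0 ≤ x) (t : ℕ) :
    Real.sqrt (x ^ t) = Real.sqrt x ^ t := by
  rw [← Real.sqrt_sq (pow_nonneg (Real.sqrt_nonneg x) t)]
  congr 1
  rw [← pow_mul, mul_comm, pow_mul, Real.sq_sqrt hx]

/-- On a nonnegative `β`-smooth `μ`-PL* function, exact gradient descent with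
`η = 1/β` has geometrically decaying step lengths, summable steps, hence the
iterates form a Cauchy sequence and converge. -/
theorem pl_gd_iterates_converge
    {d : ℕ} (L : EuclideanSpace ℝ (Fin d) → ℝ)
    (μ β η : ℝ)
    (hL0 : ∀ θ, 0 ≤ L θ)
    (hdiff : Differentiable ℝ L)
    (hμ : 0 < μ) (hβ : 0 < β) (hμβ : μ ≤ β)
    (hη : η = 1 / β)
    (hsmooth : ∀ x y, ‖gradient L x - gradient L y‖ ≤ β * ‖x - y‖)
    (hPL : ∀ θ, μ * L θ ≤ (1 / 2) * ‖gradient L θ‖ ^ 2)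
    (θ : ℕ → EuclideanSpace ℝ (Fin d))
    (hstep : ∀ t, θ (t + 1) = θ t - η • gradient L (θ t)) :
    (∀ t, ‖θ (t + 1) - θ t‖ ≤
        η * Real.sqrt (2 * β * L (θ 0)) * Real.sqrt ((1 - η * μ) ^ t)) ∧
    Summable (fun t => ‖θ (t + 1) - θ t‖) ∧
    CauchySeq θ ∧
    ∃ θlim, Filter.Tendsto θ Filter.atTop (nhds θlim) := by
  have hβ' : β ≠ 0 := ne_of_gt hβ
  have hη0 : 0 < η := by rw [hη]; positivity
  have hr0 : 0 ≤ 1 - η * μ := by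
    rw [hη]
    have : μ / β ≤ 1 := (div_le_one hβ).2 hμβ
    have h : 1 / β * μ = μ / β := by ring
    linarith [h ▸ this]
  have hr1 : 1 - η * μ < 1 := by
    have : 0 < η * μ := mul_pos hη0 hμ
    linarith
  -- key one-step descent inequality
  have key : ∀ x, L (x - η • gradient L x)
      ≤ L x - 1 / (2 * β) * ‖gradient L x‖ ^ 2 := by
    intro x
    have hd := descent_lemma L β hβ hdiff hsmooth x (-(η • gradient L x))
    have e1 : x + -(η • gradient L x) = x - η • gradient L x := by abel
    have e2 : ⟪gradient L x, -(η • gradient L x)⟫ = -(η * ‖gradient L x‖ ^ 2) := by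
      rw [inner_neg_right, real_inner_smul_right, real_inner_self_eq_norm_sq]
    have e3 : ‖-(η • gradient L x)‖ ^ 2 = η ^ 2 * ‖gradient L x‖ ^ 2 := by
      rw [norm_neg, norm_smul, Real.norm_eq_abs, abs_of_pos hη0, mul_pow]
    rw [e1, e2, e3] at hd
    have : η - β / 2 * η ^ 2 = 1 / (2 * β) := by
      rw [hη]; field_simp; ring
    nlinarith [hd]
  -- gradient bounded by value
  have hgrad : ∀ x, ‖gradient L x‖ ^ 2 ≤ 2 * β * L x := by
    intro x
    have h1 := key x
    have h2 := hL0 (x - η • gradient L x)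
    have h3 : 0 < 1 / (2 * β) := by positivity
    have h4 : 1 / (2 * β) * ‖gradient L x‖ ^ 2 ≤ L x := by linarith
    have h5 := mul_le_mul_of_nonneg_left h4 (by positivity : (0:ℝ) ≤ 2 * β)
    have h6 : 2 * β * (1 / (2 * β) * ‖gradient L x‖ ^ 2) = ‖gradient L x‖ ^ 2 := by
      field_simp
    linarith
  -- one-step value contraction
  have hdec : ∀ t, L (θ (t + 1)) ≤ (1 - η * μ) * L (θ t) := by
    intro t
    have h1 := key (θ t)
    rw [← hstep t] at h1
    have h2 := mul_le_mul_of_nonneg_left (hPL (θ t)) (le_of_lt (by positivity : (0:ℝ) < 1 / β))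
    have h3 : η * μ * L (θ t) ≤ 1 / (2 * β) * ‖gradient L (θ t)‖ ^ 2 := by
      rw [hη]
      have e1 : 1 / β * μ * L (θ t) = 1 / β * (μ * L (θ t)) := by ring
      have e2 : 1 / β * (1 / 2 * ‖gradient L (θ t)‖ ^ 2)
          = 1 / (2 * β) * ‖gradient L (θ t)‖ ^ 2 := by ring
      linarith [h2, e1, e2]
    nlinarith
  -- geometric value decay
  have hLt : ∀ t, L (θ t) ≤ (1 - η * μ) ^ t * L (θ 0) := by
    intro t
    induction t with
    | zero => simp
    | succ n ih =>
      calc L (θ (n + 1)) ≤ (1 - η * μ) * L (θ n) := hdec n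
        _ ≤ (1 - η * μ) * ((1 - η * μ) ^ n * L (θ 0)) :=
            mul_le_mul_of_nonneg_left ih hr0
        _ = (1 - η * μ) ^ (n + 1) * L (θ 0) := by ring
  -- step-length bound
  have hbnd : ∀ t, ‖θ (t + 1) - θ t‖ ≤
      η * Real.sqrt (2 * β * L (θ 0)) * Real.sqrt ((1 - η * μ) ^ t) := by
    intro t
    have e : θ (t + 1) - θ t = -(η • gradient L (θ t)) := by rw [hstep t]; abel
    have en : ‖θ (t + 1) - θ t‖ = η * ‖gradient L (θ t)‖ := by
      rw [e, norm_neg, norm_smul, Real.norm_eq_abs, abs_of_pos hη0]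
    have h1 : ‖gradient L (θ t)‖ ≤ Real.sqrt (2 * β * L (θ t)) := by
      have := Real.sqrt_le_sqrt (hgrad (θ t))
      rwa [Real.sqrt_sq (norm_nonneg _)] at this
    have h2 : 2 * β * L (θ t) ≤ 2 * β * L (θ 0) * (1 - η * μ) ^ t := by
      have := mul_le_mul_of_nonneg_left (hLt t) (by positivity : (0:ℝ) ≤ 2 * β)
      nlinarith [this]
    have h3 : Real.sqrt (2 * β * L (θ t))
        ≤ Real.sqrt (2 * β * L (θ 0)) * Real.sqrt ((1 - η * μ) ^ t) := by
      rw [← Real.sqrt_mul (by have := hL0 (θ 0); positivity)]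
      exact Real.sqrt_le_sqrt h2
    calc ‖θ (t + 1) - θ t‖ = η * ‖gradient L (θ t)‖ := en
      _ ≤ η * Real.sqrt (2 * β * L (θ t)) := by
          exact mul_le_mul_of_nonneg_left h1 hη0.le
      _ ≤ η * (Real.sqrt (2 * β * L (θ 0)) * Real.sqrt ((1 - η * μ) ^ t)) :=
          mul_le_mul_of_nonneg_left h3 hη0.le
      _ = η * Real.sqrt (2 * β * L (θ 0)) * Real.sqrt ((1 - η * μ) ^ t) := by ring
  -- summability
  have hsum : Summable (fun t => ‖θ (t + 1) - θ t‖) := by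
    have hrlt : Real.sqrt (1 - η * μ) < 1 := by
      calc Real.sqrt (1 - η * μ) < Real.sqrt 1 := Real.sqrt_lt_sqrt hr0 (by linarith)
        _ = 1 := Real.sqrt_one
    have hgeo : Summable (fun t : ℕ =>
        η * Real.sqrt (2 * β * L (θ 0)) * Real.sqrt (1 - η * μ) ^ t) :=
      (summable_geometric_of_lt_one (Real.sqrt_nonneg _) hrlt).mul_left _
    apply Summable.of_nonneg_of_le (fun t => norm_nonneg _) _ hgeo
    intro t
    have := hbnd t
    rwa [sqrt_pow_aux _ hr0] at this
  have hcauchy : CauchySeq θ := by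
    apply cauchySeq_of_summable_dist
    simpa [dist_eq_norm, norm_sub_rev] using hsum
  exact ⟨hbnd, hsum, hcauchy, cauchySeq_tendsto_of_complete hcauchy⟩
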